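/- The function G_8(ρ) = 2ρ^4 + 3ρ^3 + ρ^2 + 3ρ - 1 + 2(1+ρ)^2(ρ + (1-ρ)log(1-ρ)) has a unique root ρ_0 in (0, 1/3), and ρ_0 ≈ 0.254876. -/

import Mathlib

open Set

noncomputable def G8fun (ρ : ℝ) : ℝ :=
  2 * ρ ^ 4 + 3 * ρ ^ 3 + ρ ^ 2 + 3 * ρ - 1
    + 2 * (1 + ρ) ^ 2 * (ρ + (1 - ρ) * Real.log (1 - ρ))

lemma G8_hasDerivAt {x : ℝ} (hx : x < 1) :
    HasDerivAt G8fun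
      (8 * x ^ 3 + 9 * x ^ 2 + 2 * x + 3
        + 4 * (1 + x) * (x + (1 - x) * Real.log (1 - x))
        - 2 * (1 + x) ^ 2 * Real.log (1 - x)) x := by
  have hne : (1 : ℝ) - x ≠ 0 := by linarith
  have hlog : HasDerivAt (fun y : ℝ => Real.log (1 - y)) (-(1 - x)⁻¹) x := by
    have h1 : HasDerivAt (fun y : ℝ => 1 - y) (-1) x := by
      exact (hasDerivAt_id' x).const_sub 1
    exact ((Real.hasDerivAt_log hne).comp x h1).congr_deriv (by ring)
  have hv : HasDerivAt (fun y : ℝ => y + (1 - y) * Real.log (1 - y))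
      (-Real.log (1 - x)) x := by
    have h1 : HasDerivAt (fun y : ℝ => 1 - y) (-1) x := by
      exact (hasDerivAt_id' x).const_sub 1
    have h2 := (hasDerivAt_id x).add (h1.mul hlog)
    refine h2.congr_deriv ?_
    field_simp
    ring
  have hu : HasDerivAt (fun y : ℝ => 2 * (1 + y) ^ 2) (4 * (1 + x)) x := by
    have h1 : HasDerivAt (fun y : ℝ => 1 + y) 1 x := by
      exact (hasDerivAt_id' x).const_add 1
    have := ((h1.pow 2).const_mul (2 : ℝ))
    refine this.congr_deriv ?_
    ring
  have hpoly : HasDerivAt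
      (fun y : ℝ => 2 * y ^ 4 + 3 * y ^ 3 + y ^ 2 + 3 * y - 1)
      (8 * x ^ 3 + 9 * x ^ 2 + 2 * x + 3) x := by
    have h := (((((hasDerivAt_pow 4 x).const_mul (2:ℝ)).add
      ((hasDerivAt_pow 3 x).const_mul (3:ℝ))).add (hasDerivAt_pow 2 x)).add
      ((hasDerivAt_id x).const_mul (3:ℝ))).sub_const 1
    refine h.congr_deriv ?_
    ring
  have := hpoly.add (hu.mul hv)
  refine this.congr_deriv ?_
  ring

lemma G8_strictMonoOn : StrictMonoOn G8fun (Icc 0 (1/3 : ℝ)) := by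
  have hcont : ContinuousOn G8fun (Icc 0 (1/3 : ℝ)) := by
    intro x hx
    have hx1 : x < 1 := lt_of_le_of_lt hx.2 (by norm_num)
    exact (G8_hasDerivAt hx1).continuousAt.continuousWithinAt
  apply strictMonoOn_of_deriv_pos (convex_Icc _ _) hcont
  intro x hx
  rw [interior_Icc] at hx
  obtain ⟨hx0, hx3⟩ := hx
  have hx1 : x < 1 := by linarith
  rw [(G8_hasDerivAt hx1).deriv]
  have hlogneg : Real.log (1 - x) < 0 :=
    Real.log_neg (by linarith) (by linarith)
  have hv : 0 ≤ x + (1 - x) * Real.log (1 - x) := by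
    have h := Real.one_sub_inv_le_log_of_pos (show (0:ℝ) < 1 - x by linarith)
    have hne : (1:ℝ) - x ≠ 0 := by linarith
    have h2 : (1 - x) * (1 - (1 - x)⁻¹) ≤ (1 - x) * Real.log (1 - x) :=
      mul_le_mul_of_nonneg_left h (by linarith)
    have h3 : (1 - x) * (1 - (1 - x)⁻¹) = -x := by field_simp; ring
    linarith
  nlinarith [sq_nonneg (1 + x), sq_nonneg x]

lemma log_bound (y : ℝ) (hy0 : 0 < y) (hy1 : y < 1) :
    |(∑ i ∈ Finset.range 9, y ^ (i + 1) / (i + 1)) + Real.log (1 - y)| ≤ y ^ 10 / (1 - y) := by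
  have h := Real.abs_log_sub_add_sum_range_le (x := y) (by rw [abs_of_pos hy0]; exact hy1) 9
  rwa [abs_of_pos hy0] at h

lemma G8_neg : G8fun 0.254866 < 0 := by
  have h := log_bound 0.254866 (by norm_num) (by norm_num)
  rw [abs_le] at h
  norm_num [Finset.sum_range_succ] at h
  unfold G8fun
  nlinarith [h.1, h.2]

lemma G8_pos : 0 < G8fun 0.254886 := by
  have h := log_bound 0.254886 (by norm_num) (by norm_num)
  rw [abs_le] at h
  norm_num [Finset.sum_range_succ] at h
  unfold G8fun
  nlinarith [h.1, h.2]

theorem G8_root :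
    (∃! ρ₀ : ℝ, ρ₀ ∈ Set.Ioo 0 (1 / 3) ∧
      2 * ρ₀ ^ 4 + 3 * ρ₀ ^ 3 + ρ₀ ^ 2 + 3 * ρ₀ - 1
        + 2 * (1 + ρ₀) ^ 2 * (ρ₀ + (1 - ρ₀) * Real.log (1 - ρ₀)) = 0) ∧
    ∀ ρ₀ : ℝ, ρ₀ ∈ Set.Ioo 0 (1 / 3) →
      2 * ρ₀ ^ 4 + 3 * ρ₀ ^ 3 + ρ₀ ^ 2 + 3 * ρ₀ - 1
        + 2 * (1 + ρ₀) ^ 2 * (ρ₀ + (1 - ρ₀) * Real.log (1 - ρ₀)) = 0 →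
      |ρ₀ - 0.254876| < 0.00001 := by
  have hsub : Icc (0.254866 : ℝ) 0.254886 ⊆ Icc 0 (1/3) := by
    apply Set.Icc_subset_Icc <;> norm_num
  have hcont : ContinuousOn G8fun (Icc (0.254866 : ℝ) 0.254886) := by
    intro x hx
    have hx1 : x < 1 := lt_of_le_of_lt hx.2 (by norm_num)
    exact (G8_hasDerivAt hx1).continuousAt.continuousWithinAt
  -- existence of a root in (0.254866, 0.254886)
  have hivt := intermediate_value_Ioo (show (0.254866:ℝ) ≤ 0.254886 by norm_num) hcont
  have h0 : (0:ℝ) ∈ Ioo (G8fun 0.254866) (G8fun 0.254886) := ⟨G8_neg, G8_pos⟩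
  obtain ⟨ρ, hρmem, hρ0⟩ := hivt h0
  -- any root in (0,1/3) lies in (0.254866, 0.254886)
  have hloc : ∀ x : ℝ, x ∈ Set.Ioo (0:ℝ) (1/3) → G8fun x = 0 →
      x ∈ Set.Ioo (0.254866:ℝ) 0.254886 := by
    intro x hx hx0
    have hxI : x ∈ Icc (0:ℝ) (1/3) := ⟨hx.1.le, hx.2.le⟩
    have haI : (0.254866:ℝ) ∈ Icc (0:ℝ) (1/3) := by constructor <;> norm_num
    have hbI : (0.254886:ℝ) ∈ Icc (0:ℝ) (1/3) := by constructor <;> norm_num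
    constructor
    · by_contra hle
      push_neg at hle
      have := G8_strictMonoOn.monotoneOn hxI haI hle
      have := G8_neg
      linarith [hx0 ▸ this]
    · by_contra hle
      push_neg at hle
      have := G8_strictMonoOn.monotoneOn hbI hxI hle
      have := G8_pos
      linarith [hx0 ▸ this]
  have hρIoo : ρ ∈ Ioo (0:ℝ) (1/3) := by
    obtain ⟨h1, h2⟩ := hρmem
    constructor
    · linarith [(by norm_num : (0:ℝ) < 0.254866)]
    · linarith [(by norm_num : (0.254886:ℝ) < 1/3)]
  constructor
  · refine ⟨ρ, ⟨hρIoo, hρ0⟩, ?_⟩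
    intro y hy
    have hyI : y ∈ Icc (0:ℝ) (1/3) := ⟨hy.1.1.le, hy.1.2.le⟩
    have hρI : ρ ∈ Icc (0:ℝ) (1/3) := ⟨hρIoo.1.le, hρIoo.2.le⟩
    refine G8_strictMonoOn.injOn hyI hρI ?_
    show G8fun y = G8fun ρ
    rw [hρ0]
    exact hy.2
  · intro x hx hx0
    have := hloc x hx hx0
    rw [abs_lt]
    constructor
    · nlinarith [this.1]
    · nlinarith [this.2]
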